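/- There exist four unit vectors φ₀, φ₁, φ₂, φ₃ in ℂ² such that |⟨φ_i, φ_j⟩| = 1/√3 for all i ≠ j. Concretely, one may take φ₀ = |0⟩ and φ_k = (1/√3)(|0⟩ + e^{2πi(k−1)/3}·√2·|1⟩) for k = 1, 2, 3. -/

import Mathlib

open scoped InnerProductSpace
open Complex

noncomputable def psi (e : ℂ) : EuclideanSpace ℂ (Fin 2) :=
  (Real.sqrt 3)⁻¹ • (EuclideanSpace.single 0 (1 : ℂ) +
    (e * Real.sqrt 2) • EuclideanSpace.single 1 (1 : ℂ))

lemma psi_zero (e : ℂ) : psi e 0 = ((Real.sqrt 3 : ℝ) : ℂ)⁻¹ := by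
  simp [psi, EuclideanSpace.single_apply, Complex.real_smul]

lemma psi_one (e : ℂ) : psi e 1 = ((Real.sqrt 3 : ℝ) : ℂ)⁻¹ * (e * Real.sqrt 2) := by
  simp [psi, EuclideanSpace.single_apply, Complex.real_smul]

lemma inner2 (x y : EuclideanSpace ℂ (Fin 2)) :
    ⟪x,y⟫_ℂ = (starRingEnd ℂ) (x 0) * y 0 + (starRingEnd ℂ) (x 1) * y 1 := by
  simp [PiLp.inner_apply, Fin.sum_univ_two, RCLike.inner_apply]; ring

lemma s3c : ((Real.sqrt 3 : ℝ) : ℂ)^2 = 3 := by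
  rw [← Complex.ofReal_pow, Real.sq_sqrt] <;> norm_num

lemma s2c : ((Real.sqrt 2 : ℝ) : ℂ)^2 = 2 := by
  rw [← Complex.ofReal_pow, Real.sq_sqrt] <;> norm_num

lemma s3ne : ((Real.sqrt 3 : ℝ) : ℂ) ≠ 0 := by
  simp [Real.sqrt_eq_zero']

lemma inner_psi_psi (e f : ℂ) :
    ⟪psi e, psi f⟫_ℂ = (1 + 2 * ((starRingEnd ℂ) e * f)) / 3 := by
  rw [inner2, psi_zero, psi_one, psi_zero, psi_one]
  have h3 := s3c; have h2 := s2c; have h3' := s3ne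
  simp only [map_mul, map_inv₀, Complex.conj_ofReal]
  field_simp
  ring_nf
  linear_combination (3 * (starRingEnd ℂ) e * f) * h2 + (-2 * (starRingEnd ℂ) e * f - 1) * h3

lemma inner_single_psi (e : ℂ) :
    ⟪(EuclideanSpace.single 0 (1:ℂ) : EuclideanSpace ℂ (Fin 2)), psi e⟫_ℂ
      = ((Real.sqrt 3 : ℝ) : ℂ)⁻¹ := by
  rw [inner2, psi_zero, psi_one]
  simp [EuclideanSpace.single_apply]

lemma inner_psi_single (e : ℂ) :
    ⟪psi e, (EuclideanSpace.single 0 (1:ℂ) : EuclideanSpace ℂ (Fin 2))⟫_ℂ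
      = ((Real.sqrt 3 : ℝ) : ℂ)⁻¹ := by
  rw [inner2, psi_zero, psi_one]
  simp [EuclideanSpace.single_apply, ← Complex.ofReal_inv, Complex.conj_ofReal]

lemma norm_inv_s3 : ‖(((Real.sqrt 3 : ℝ) : ℂ)⁻¹ : ℂ)‖ = 1 / Real.sqrt 3 := by
  rw [norm_inv, Complex.norm_real, Real.norm_eq_abs,
    _root_.abs_of_nonneg (Real.sqrt_nonneg 3), one_div]

lemma norm_psi (e : ℂ) (he : ‖e‖ = 1) : ‖psi e‖ = 1 := by
  rw [EuclideanSpace.norm_eq, Fin.sum_univ_two, psi_zero, psi_one]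
  rw [norm_mul, norm_mul, he, norm_inv, Complex.norm_real, Complex.norm_real,
    Real.norm_eq_abs, Real.norm_eq_abs, _root_.abs_of_nonneg (Real.sqrt_nonneg 3),
    _root_.abs_of_nonneg (Real.sqrt_nonneg 2)]
  have h3 : (Real.sqrt 3)^2 = 3 := Real.sq_sqrt (by norm_num)
  have h2 : (Real.sqrt 2)^2 = 2 := Real.sq_sqrt (by norm_num)
  have h3p : (0:ℝ) < Real.sqrt 3 := Real.sqrt_pos.mpr (by norm_num)
  rw [show ((Real.sqrt 3)⁻¹^2 + ((Real.sqrt 3)⁻¹ * (1 * Real.sqrt 2))^2 : ℝ) = 1 by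
    field_simp; nlinarith]
  exact Real.sqrt_one

-- ω = exp(2πi/3)
noncomputable def w : ℂ := -1/2 + ((Real.sqrt 3 : ℝ) : ℂ)/2 * I

lemma exp_w : Complex.exp (2 * Real.pi * Complex.I / 3) = w := by
  have h : (2*(Real.pi:ℂ)*I/3) = ((2*Real.pi/3 : ℝ):ℂ) * I := by push_cast; ring
  rw [h, Complex.exp_mul_I]
  have hc : Real.cos (2*Real.pi/3) = -(1/2) := by
    rw [show (2*Real.pi/3) = Real.pi - Real.pi/3 by ring, Real.cos_pi_sub,
      Real.cos_pi_div_three]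
  have hs : Real.sin (2*Real.pi/3) = Real.sqrt 3/2 := by
    rw [show (2*Real.pi/3) = Real.pi - Real.pi/3 by ring, Real.sin_pi_sub,
      Real.sin_pi_div_three]
  rw [← Complex.ofReal_cos, ← Complex.ofReal_sin, hc, hs, w]
  push_cast; ring

lemma norm_w : ‖w‖ = 1 := by
  rw [← exp_w, show (2*(Real.pi:ℂ)*I/3) = ((2*Real.pi/3 : ℝ):ℂ) * I by push_cast; ring,
    Complex.norm_exp_ofReal_mul_I]

lemma w_sq : w^2 = -1/2 - ((Real.sqrt 3 : ℝ) : ℂ)/2 * I := by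
  rw [w]; linear_combination (I^2/4) * s3c + (3/4) * Complex.I_sq

lemma exp_w2 : Complex.exp (4 * Real.pi * Complex.I / 3)
    = -1/2 - ((Real.sqrt 3 : ℝ) : ℂ)/2 * I := by
  rw [show (4*(Real.pi:ℂ)*I/3) = 2*Real.pi*I/3 + 2*Real.pi*I/3 by ring,
    Complex.exp_add, exp_w, ← sq, w_sq]

lemma conj_w : (starRingEnd ℂ) w = -1/2 - ((Real.sqrt 3 : ℝ) : ℂ)/2 * I := by
  rw [w]; simp [map_div₀, Complex.conj_ofReal, map_ofNat]; ring

lemma norm_w2 : ‖(-1/2 - ((Real.sqrt 3 : ℝ) : ℂ)/2 * I : ℂ)‖ = 1 := by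
  rw [← conj_w, RCLike.norm_conj, norm_w]

lemma norm_case (c : ℂ) (h : 1 + 2*c = ((Real.sqrt 3 : ℝ) : ℂ) * I ∨
    1 + 2*c = -(((Real.sqrt 3 : ℝ) : ℂ) * I)) :
    ‖((1 + 2*c)/3 : ℂ)‖ = 1 / Real.sqrt 3 := by
  have hb : ‖(((Real.sqrt 3 : ℝ) : ℂ) * I : ℂ)‖ = Real.sqrt 3 := by
    rw [norm_mul, Complex.norm_real, Complex.norm_I, Real.norm_eq_abs,
      _root_.abs_of_nonneg (Real.sqrt_nonneg 3), mul_one]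
  have : ‖(1 + 2*c : ℂ)‖ = Real.sqrt 3 := by
    rcases h with h | h <;> rw [h] <;> simp [hb]
  rw [norm_div, this]
  rw [show ‖(3:ℂ)‖ = 3 by norm_num]
  have hne : Real.sqrt 3 ≠ 0 := (Real.sqrt_pos.mpr (by norm_num)).ne'
  have h33 : Real.sqrt 3 * Real.sqrt 3 = 3 := Real.mul_self_sqrt (by norm_num)
  field_simp
  rw [sq, h33]

example : True := trivial

lemma conj_w' : (starRingEnd ℂ) (-1/2 - ((Real.sqrt 3 : ℝ) : ℂ)/2 * I) = w := by
  rw [← conj_w, Complex.conj_conj]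

noncomputable def Phi : Fin 4 → EuclideanSpace ℂ (Fin 2) := fun k =>
  if k = 0 then EuclideanSpace.single 0 1
  else psi (Complex.exp (2 * Real.pi * Complex.I * ((k.val : ℂ) - 1) / 3))

lemma Phi0 : Phi 0 = EuclideanSpace.single 0 1 := by simp [Phi]

lemma Phi1 : Phi 1 = psi 1 := by
  simp only [Phi, if_neg (show (1:Fin 4) ≠ 0 by decide)]
  rw [show (2 * (Real.pi:ℂ) * Complex.I * (((1:Fin 4).val : ℂ) - 1) / 3) = 0 by
    norm_num, Complex.exp_zero]

lemma Phi2 : Phi 2 = psi w := by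
  simp only [Phi, if_neg (show (2:Fin 4) ≠ 0 by decide)]
  rw [show (2 * (Real.pi:ℂ) * Complex.I * (((2:Fin 4).val : ℂ) - 1) / 3)
      = 2 * Real.pi * Complex.I / 3 by norm_num, exp_w]

lemma Phi3 : Phi 3 = psi (-1/2 - ((Real.sqrt 3 : ℝ) : ℂ)/2 * I) := by
  simp only [Phi, if_neg (show (3:Fin 4) ≠ 0 by decide)]
  rw [show (2 * (Real.pi:ℂ) * Complex.I * (((3:Fin 4).val : ℂ) - 1) / 3)
      = 4 * Real.pi * Complex.I / 3 by
        rw [show (((3:Fin 4).val : ℂ)) = 3 from rfl]; ring, exp_w2]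

set_option maxHeartbeats 2000000 in
theorem exists_four_states_inner_inv_sqrt_three :
    ∃ φ : Fin 4 → EuclideanSpace ℂ (Fin 2),
      φ 0 = EuclideanSpace.single 0 1 ∧
      (∀ k : Fin 4, k ≠ 0 →
        φ k = (Real.sqrt 3)⁻¹ •
          (EuclideanSpace.single 0 (1 : ℂ) +
            (Complex.exp (2 * Real.pi * Complex.I * ((k.val : ℂ) - 1) / 3) *
              Real.sqrt 2) • EuclideanSpace.single 1 (1 : ℂ))) ∧
      (∀ i, ‖φ i‖ = 1) ∧
      (∀ i j, i ≠ j → ‖⟪φ i, φ j⟫_ℂ‖ = 1 / Real.sqrt 3) := by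
  refine ⟨Phi, Phi0, fun k hk => by simp only [Phi, if_neg hk]; rfl, ?_, ?_⟩
  · intro i
    fin_cases i
    · show ‖Phi 0‖ = 1
      rw [Phi0]
      simp [EuclideanSpace.norm_eq, Fin.sum_univ_two, EuclideanSpace.single_apply]
    · show ‖Phi 1‖ = 1
      rw [Phi1]; exact norm_psi 1 (by simp)
    · show ‖Phi 2‖ = 1
      rw [Phi2]; exact norm_psi w norm_w
    · show ‖Phi 3‖ = 1
      rw [Phi3]; exact norm_psi _ norm_w2
  · intro i j hij
    fin_cases i <;> fin_cases j
    · exact absurd rfl hij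
    · show ‖⟪Phi 0, Phi 1⟫_ℂ‖ = 1/Real.sqrt 3
      rw [Phi0, Phi1, inner_single_psi]; exact norm_inv_s3
    · show ‖⟪Phi 0, Phi 2⟫_ℂ‖ = 1/Real.sqrt 3
      rw [Phi0, Phi2, inner_single_psi]; exact norm_inv_s3
    · show ‖⟪Phi 0, Phi 3⟫_ℂ‖ = 1/Real.sqrt 3
      rw [Phi0, Phi3, inner_single_psi]; exact norm_inv_s3
    · show ‖⟪Phi 1, Phi 0⟫_ℂ‖ = 1/Real.sqrt 3
      rw [Phi0, Phi1, inner_psi_single]; exact norm_inv_s3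
    · exact absurd rfl hij
    · show ‖⟪Phi 1, Phi 2⟫_ℂ‖ = 1/Real.sqrt 3
      rw [Phi1, Phi2, inner_psi_psi, map_one]
      refine norm_case _ (Or.inl ?_)
      rw [w]; ring
    · show ‖⟪Phi 1, Phi 3⟫_ℂ‖ = 1/Real.sqrt 3
      rw [Phi1, Phi3, inner_psi_psi, map_one]
      exact norm_case _ (Or.inr (by ring))
    · show ‖⟪Phi 2, Phi 0⟫_ℂ‖ = 1/Real.sqrt 3
      rw [Phi0, Phi2, inner_psi_single]; exact norm_inv_s3
    · show ‖⟪Phi 2, Phi 1⟫_ℂ‖ = 1/Real.sqrt 3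
      rw [Phi2, Phi1, inner_psi_psi, conj_w]
      exact norm_case _ (Or.inr (by ring))
    · exact absurd rfl hij
    · show ‖⟪Phi 2, Phi 3⟫_ℂ‖ = 1/Real.sqrt 3
      rw [Phi2, Phi3, inner_psi_psi, conj_w]
      refine norm_case _ (Or.inl ?_)
      linear_combination (I^2/2) * s3c + (3/2) * Complex.I_sq
    · show ‖⟪Phi 3, Phi 0⟫_ℂ‖ = 1/Real.sqrt 3
      rw [Phi0, Phi3, inner_psi_single]; exact norm_inv_s3
    · show ‖⟪Phi 3, Phi 1⟫_ℂ‖ = 1/Real.sqrt 3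
      rw [Phi3, Phi1, inner_psi_psi, conj_w']
      refine norm_case _ (Or.inl ?_)
      rw [w]; ring
    · show ‖⟪Phi 3, Phi 2⟫_ℂ‖ = 1/Real.sqrt 3
      rw [Phi3, Phi2, inner_psi_psi, conj_w']
      refine norm_case _ (Or.inr ?_)
      rw [w]
      linear_combination (I^2/2) * s3c + (3/2) * Complex.I_sq
    · exact absurd rfl hij
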